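/- Let ι and κ be finite nonempty types, let g : ι → κ be a surjection, and let F be the induced linear projection. For every y ∈ stdSimplex ℝ κ with all coordinates positive (i.e. ∀ j, 0 < y j), the fiber {x ∈ stdSimplex ℝ ι | F x = y}, with the subspace topology from ι → ℝ, is homeomorphic to the product ∏_{j : κ} stdSimplex ℝ {i : ι // g i = j}. In particular all fibers of F over interior points of the target simplex are homeomorphic to each other. -/

import Mathlib

/-- The fiber of the induced simplicial projection over an interior
point of the target simplex is homeomorphic to the product of the vertex fibers
`∏ j, stdSimplex ℝ {i // g i = j}`. -/
theorem fiber_homeomorph_pi_stdSimplex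
    {ι κ : Type*} [Fintype ι] [Fintype κ] [Nonempty ι] [Nonempty κ] [DecidableEq κ]
    (g : ι → κ) (hg : Function.Surjective g)
    (F : (ι → ℝ) → (κ → ℝ))
    (hF : ∀ x j, F x j = ∑ i ∈ Finset.univ.filter (fun i => g i = j), x i)
    (y : κ → ℝ) (hy : y ∈ stdSimplex ℝ κ) (hypos : ∀ j, 0 < y j) :
    Nonempty (({x ∈ stdSimplex ℝ ι | F x = y} : Set (ι → ℝ)) ≃ₜ
      (∀ j : κ, (stdSimplex ℝ {i : ι // g i = j} : Set ({i : ι // g i = j} → ℝ)))) := by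
  classical
  have hyne : ∀ j, y j ≠ 0 := fun j => (hypos j).ne'
  have key : ∀ (x : ι → ℝ) (j : κ),
      ∑ i : {i : ι // g i = j}, x i.1 = ∑ i ∈ Finset.univ.filter (fun i => g i = j), x i := by
    intro x j
    exact (Finset.sum_subtype (Finset.univ.filter (fun i => g i = j)) (by simp) x)|>.symm
  set S : Set (ι → ℝ) := {x ∈ stdSimplex ℝ ι | F x = y} with hS
  -- forward map
  have fwd_mem : ∀ (x : S) (j : κ), (fun i : {i : ι // g i = j} => x.1 i.1 / y j) ∈
      stdSimplex ℝ {i : ι // g i = j} := by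
    intro x j
    constructor
    · intro i; exact div_nonneg (x.2.1.1 i.1) (hypos j).le
    · rw [← Finset.sum_div, key, ← hF, x.2.2, div_self (hyne j)]
  let φ : S → ∀ j : κ, (stdSimplex ℝ {i : ι // g i = j} : Set ({i : ι // g i = j} → ℝ)) :=
    fun x j => ⟨fun i => x.1 i.1 / y j, fwd_mem x j⟩
  -- backward map
  have inner : ∀ (z : ∀ j : κ, (stdSimplex ℝ {i : ι // g i = j} : Set ({i : ι // g i = j} → ℝ)))
      (j : κ), ∑ i ∈ Finset.univ.filter (fun i => g i = j),
        (y (g i) * (z (g i)).1 ⟨i, rfl⟩) = y j := by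
    intro z j
    rw [← key (fun i => y (g i) * (z (g i)).1 ⟨i, rfl⟩) j]
    have : ∀ i : {i : ι // g i = j},
        y (g i.1) * (z (g i.1)).1 ⟨i.1, rfl⟩ = y j * (z j).1 i := by
      rintro ⟨i, hi⟩; subst hi; rfl
    rw [Finset.sum_congr rfl (fun i _ => this i), ← Finset.mul_sum, (z j).2.2, mul_one]
  have bwd_mem : ∀ (z : ∀ j : κ, (stdSimplex ℝ {i : ι // g i = j} : Set ({i : ι // g i = j} → ℝ))), (fun i : ι => y (g i) * (z (g i)).1 ⟨i, rfl⟩) ∈ S := by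
    intro z
    refine ⟨⟨fun i => mul_nonneg (hypos (g i)).le ((z (g i)).2.1 _), ?_⟩, ?_⟩
    · rw [← Finset.sum_fiberwise_of_maps_to (g := g) (fun i _ => Finset.mem_univ (g i))]
      rw [Finset.sum_congr rfl (fun j _ => inner z j)]
      exact hy.2
    · funext j
      rw [hF, inner z j]
  let ψ : (∀ j : κ, (stdSimplex ℝ {i : ι // g i = j} : Set ({i : ι // g i = j} → ℝ))) → S :=
    fun z => ⟨fun i => y (g i) * (z (g i)).1 ⟨i, rfl⟩, bwd_mem z⟩
  have left : Function.LeftInverse ψ φ := by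
    intro x
    apply Subtype.ext
    funext i
    show y (g i) * (x.1 i / y (g i)) = x.1 i
    rw [mul_comm, div_mul_cancel₀ _ (hyne (g i))]
  have right : Function.RightInverse ψ φ := by
    intro z
    funext j
    apply Subtype.ext
    funext i
    obtain ⟨i, hi⟩ := i
    subst hi
    show y (g i) * (z (g i)).1 ⟨i, rfl⟩ / y (g i) = (z (g i)).1 ⟨i, rfl⟩
    rw [mul_comm, mul_div_assoc, div_self (hyne (g i)), mul_one]
  -- compactness of the fiber
  have hFc : Continuous F := by
    have : F = fun x j => ∑ i ∈ Finset.univ.filter (fun i => g i = j), x i := by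
      funext x j; exact hF x j
    rw [this]
    exact continuous_pi fun j => continuous_finset_sum _ fun i _ => continuous_apply i
  have hScl : IsClosed S := by
    have : S = stdSimplex ℝ ι ∩ F ⁻¹' {y} := by
      ext x; simp [hS, Set.mem_setOf_eq, and_comm]
    rw [this]
    exact (isClosed_stdSimplex ℝ ι).inter (isClosed_singleton.preimage hFc)
  have hScomp : IsCompact S :=
    (isCompact_stdSimplex ℝ ι).of_isClosed_subset hScl (fun x hx => hx.1)
  have : CompactSpace S := isCompact_iff_compactSpace.mp hScomp
  have hφc : Continuous φ := by
    refine continuous_pi fun j => Continuous.subtype_mk ?_ _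
    exact continuous_pi fun i =>
      ((continuous_apply i.1).comp continuous_subtype_val).div_const _
  exact ⟨Continuous.homeoOfEquivCompactToT2 (f := ⟨φ, ψ, left, right⟩) hφc⟩
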